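/- If G is a unipolar graph, then G contains no hole as an induced subgraph; that is, G contains no induced chordless cycle on five or more vertices. -/

import Mathlib

/-- A clique split of a graph `G`: the vertex set is partitioned into a center clique `H`
and peripheral cliques `P 0, …, P (k-1)` with no edges between distinct peripheral cliques. -/
structure IsCliqueSplit {V : Type*} (G : SimpleGraph V) (H : Set V) {k : ℕ}
    (P : Fin k → Set V) : Prop where
  center_clique : G.IsClique H
  periph_clique : ∀ i, G.IsClique (P i)
  center_disj : ∀ i, Disjoint H (P i)
  periph_disj : ∀ i j, i ≠ j → Disjoint (P i) (P j)
  covers : H ∪ (⋃ i, P i) = Set.univ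
  no_cross : ∀ i j, i ≠ j → ∀ u ∈ P i, ∀ v ∈ P j, ¬ G.Adj u v

/-- A graph is unipolar if it admits a clique split. -/
def Unipolar {V : Type*} (G : SimpleGraph V) : Prop :=
  ∃ (H : Set V) (k : ℕ) (P : Fin k → Set V), IsCliqueSplit G H P

open Fin.NatCast Fin.CommRing

private lemma fin_natCast_ne_zero (m c : ℕ) (h1 : 0 < c) (h2 : c < m + 5) :
    (c : Fin (m + 5)) ≠ 0 := by
  simp [Fin.ext_iff, Fin.val_natCast, Nat.mod_eq_of_lt h2]
  omega

/-- If `G` is unipolar, then `G` contains no hole (induced chordless cycle on five or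
more vertices) as an induced subgraph. -/
theorem unipolar_no_hole {V : Type*} (G : SimpleGraph V) (hG : Unipolar G)
    (n : ℕ) (hn : 5 ≤ n) :
    IsEmpty (SimpleGraph.cycleGraph n ↪g G) := by
  obtain ⟨m, rfl⟩ : ∃ m, n = m + 5 := ⟨n - 5, by omega⟩
  obtain ⟨H, k, P, hs⟩ := hG
  constructor
  intro f
  have hadj : ∀ u v : Fin (m + 5),
      (SimpleGraph.cycleGraph (m + 5)).Adj u v ↔ u - v = 1 ∨ v - u = 1 :=
    fun u v => SimpleGraph.cycleGraph_adj (n := m + 3)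
  have hmap : ∀ u v : Fin (m + 5),
      G.Adj (f u) (f v) ↔ (SimpleGraph.cycleGraph (m + 5)).Adj u v :=
    fun u v => f.map_adj_iff
  -- numeral facts
  have h1 : ((1 : ℕ) : Fin (m + 5)) ≠ 0 := fin_natCast_ne_zero m 1 (by omega) (by omega)
  have h2 : ((2 : ℕ) : Fin (m + 5)) ≠ 0 := fin_natCast_ne_zero m 2 (by omega) (by omega)
  have h3 : ((3 : ℕ) : Fin (m + 5)) ≠ 0 := fin_natCast_ne_zero m 3 (by omega) (by omega)
  have h4 : ((4 : ℕ) : Fin (m + 5)) ≠ 0 := fin_natCast_ne_zero m 4 (by omega) (by omega)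
  -- if two cycle vertices both map into the center, they are near each other
  have hnear : ∀ b c : Fin (m + 5), f b ∈ H → f c ∈ H → c = b ∨ c = b + 1 ∨ c + 1 = b := by
    intro b c hb hc
    by_cases hcb : c = b
    · exact Or.inl hcb
    · have hfne : f c ≠ f b := fun h => hcb (f.injective h)
      have hGadj : G.Adj (f c) (f b) := hs.center_clique hc hb hfne
      have := (hadj c b).mp ((hmap c b).mp hGadj)
      rcases this with h | h
      · exact Or.inr (Or.inl (by linear_combination h))
      · exact Or.inr (Or.inr (by linear_combination -h))
  -- there are three consecutive cycle vertices all mapping outside the center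
  have key : ∃ x : Fin (m + 5), f x ∉ H ∧ f (x + 1) ∉ H ∧ f (x + 2) ∉ H := by
    by_cases hA : ∃ a, f a ∈ H
    · obtain ⟨a, ha⟩ := hA
      by_cases hb : f (a + 1) ∈ H
      · refine ⟨a + 2, ?_, ?_, ?_⟩
        · intro h
          rcases hnear a (a + 2) ha h with h' | h' | h'
          · exact h2 (by linear_combination h')
          · exact h1 (by linear_combination h')
          · exact h3 (by linear_combination h')
        · intro h
          rcases hnear a (a + 2 + 1) ha h with h' | h' | h'
          · exact h3 (by linear_combination h')
          · exact h2 (by linear_combination h')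
          · exact h4 (by linear_combination h')
        · intro h
          rcases hnear (a + 1) (a + 2 + 2) hb h with h' | h' | h'
          · exact h3 (by linear_combination h')
          · exact h2 (by linear_combination h')
          · exact h4 (by linear_combination h')
      · refine ⟨a + 1, hb, ?_, ?_⟩
        · intro h
          rcases hnear a (a + 1 + 1) ha h with h' | h' | h'
          · exact h2 (by linear_combination h')
          · exact h1 (by linear_combination h')
          · exact h3 (by linear_combination h')
        · intro h
          rcases hnear a (a + 1 + 2) ha h with h' | h' | h'
          · exact h3 (by linear_combination h')
          · exact h2 (by linear_combination h')
          · exact h4 (by linear_combination h')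
    · push_neg at hA
      exact ⟨0, hA _, hA _, hA _⟩
  obtain ⟨x, hx0, hx1, hx2⟩ := key
  have mem : ∀ v : V, v ∉ H → ∃ i, v ∈ P i := by
    intro v hv
    have hv' : v ∈ H ∪ ⋃ i, P i := hs.covers ▸ Set.mem_univ v
    rcases hv' with h | h
    · exact absurd h hv
    · simpa using h
  obtain ⟨i, hi⟩ := mem _ hx0
  obtain ⟨j, hj⟩ := mem _ hx1
  obtain ⟨l, hl⟩ := mem _ hx2
  have adj01 : G.Adj (f x) (f (x + 1)) :=
    (hmap x (x + 1)).mpr ((hadj x (x + 1)).mpr (Or.inr (by ring)))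
  have adj12 : G.Adj (f (x + 1)) (f (x + 2)) :=
    (hmap (x + 1) (x + 2)).mpr ((hadj (x + 1) (x + 2)).mpr (Or.inr (by ring)))
  have hij : i = j := by
    by_contra h
    exact hs.no_cross i j h _ hi _ hj adj01
  have hjl : j = l := by
    by_contra h
    exact hs.no_cross j l h _ hj _ hl adj12
  subst hij; subst hjl
  have hxne : x ≠ x + 2 := by
    intro h
    exact h2 (by linear_combination -h)
  have hfne : f x ≠ f (x + 2) := fun h => hxne (f.injective h)
  have hGadj : G.Adj (f x) (f (x + 2)) := hs.periph_clique i hi hl hfne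
  rcases (hadj x (x + 2)).mp ((hmap x (x + 2)).mp hGadj) with h | h
  · exact h3 (by linear_combination -h)
  · exact h1 (by linear_combination h)
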